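/- Under smooth inverse mean curvature flow ∂X/∂t = ν/H in a static space (M,g,V) (so R(g)=0, Δ_g V = 0, Hess_g V = V Ric_g), the functional Q(t) = |Σ_t|^{−(n−2)/(n−1)} ( ∫_{Σ_t} V H dσ + 2(n−1)ω_{n−1} m ) satisfies dQ/dt = − |Σ_t|^{−(n−2)/(n−1)} ∫_{Σ_t} (V/H) |h̊|² dσ ≤ 0, where h̊ is the trace-free second fundamental form and m = (1/((n−2)ω_{n−1})) ∫_{Σ_t} ∂V/∂ν dσ is constant in t. -/

import Mathlib

open MeasureTheory

/-- Under smooth inverse mean curvature flow in a static space, the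
functional `Q(t) = |Σ_t|^{−(n−2)/(n−1)} (∫_{Σ_t} V H dσ + 2(n−1)ω_{n−1} m)` satisfies
`Q'(t) = −|Σ_t|^{−(n−2)/(n−1)} ∫_{Σ_t} (V/H)|h̊|² dσ ≤ 0`.

The evolving hypersurface is modelled by a fixed measure space `(S, μ)` with
time-dependent area density `J` (so `∂J/∂t = J` under IMCF and `|Σ_t| = ∫ J dμ`);
`V, H, DV = ∂V/∂ν, Ric = Ric(ν,ν), LapV = Δ_{Σ_t}V, LapInvH = Δ_{Σ_t}(1/H)` and
`osc = |h̊|²` are the relevant geometric quantities, subject to the IMCF variation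
formulas, the static identity, self-adjointness of `Δ_{Σ_t}` (integration by parts),
constancy of the mass `m`, and differentiation under the integral sign. -/
theorem Q_monotone_smooth_IMCF
    {S : Type*} [MeasurableSpace S] (μ : Measure S)
    (n : ℕ) (hn : 3 ≤ n) (ω m : ℝ) (hω : 0 < ω)
    (V H J DV Ric LapV LapInvH osc : ℝ → S → ℝ)
    (hHpos : ∀ t p, 0 < H t p) (hVpos : ∀ t p, 0 < V t p) (hJpos : ∀ t p, 0 < J t p)
    (hosc : ∀ t p, 0 ≤ osc t p)
    (hJev : ∀ t p, HasDerivAt (fun s => J s p) (J t p) t)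
    (hHev : ∀ t p, HasDerivAt (fun s => H s p)
      (-(LapInvH t p) - (osc t p + (H t p) ^ 2 / ((n : ℝ) - 1) + Ric t p) / H t p) t)
    (hVev : ∀ t p, HasDerivAt (fun s => V s p)
      (LapV t p / (H t p) ^ 2 + V t p * Ric t p / (H t p) ^ 2 + 2 * DV t p / H t p) t)
    (hstatic : ∀ t p, LapV t p + V t p * Ric t p = -(H t p) * DV t p)
    (hIBP : ∀ t, ∫ p, V t p * LapInvH t p * J t p ∂μ
      = ∫ p, (H t p)⁻¹ * LapV t p * J t p ∂μ)
    (hmass : ∀ t, ∫ p, DV t p * J t p ∂μ = ((n : ℝ) - 2) * ω * m)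
    (hLeibniz : ∀ f f' : ℝ → S → ℝ,
      (∀ t p, HasDerivAt (fun s => f s p) (f' t p) t) →
      ∀ t, HasDerivAt (fun s => ∫ p, f s p ∂μ) (∫ p, f' t p ∂μ) t)
    (A B Q : ℝ → ℝ)
    (hA : ∀ t, A t = ∫ p, J t p ∂μ) (hApos : ∀ t, 0 < A t)
    (hB : ∀ t, B t = ∫ p, V t p * H t p * J t p ∂μ)
    (hQ : ∀ t, Q t = A t ^ (-(((n : ℝ) - 2) / ((n : ℝ) - 1)))
      * (B t + 2 * ((n : ℝ) - 1) * ω * m)) :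
    ∀ t, HasDerivAt Q
        (-(A t ^ (-(((n : ℝ) - 2) / ((n : ℝ) - 1))))
          * ∫ p, V t p / H t p * osc t p * J t p ∂μ) t
      ∧ -(A t ^ (-(((n : ℝ) - 2) / ((n : ℝ) - 1))))
          * ∫ p, V t p / H t p * osc t p * J t p ∂μ ≤ 0 := by
  intro t
  have hn3 : (3:ℝ) ≤ (n:ℝ) := by exact_mod_cast hn
  have hn1 : (0:ℝ) < (n:ℝ) - 1 := by linarith
  set c : ℝ := ((n : ℝ) - 2) / ((n : ℝ) - 1) with hc
  -- additivity of the integral, derived from hLeibniz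
  have hadd : ∀ a b : S → ℝ, (∫ p, (a p + b p) ∂μ) = (∫ p, a p ∂μ) + ∫ p, b p ∂μ := by
    intro a b
    have hpt0 : ∀ (u : ℝ) (q : S), HasDerivAt (fun s => a q + s * b q) (b q) u := by
      intro u q
      exact (hasDerivAt_mul_const (b q)).const_add (a q)
    have h1 : ∀ s : ℝ, HasDerivAt (fun s => ∫ p, (a p + s * b p) ∂μ) (∫ p, b p ∂μ) s :=
      fun s => hLeibniz (fun s p => a p + s * b p) (fun _ p => b p) hpt0 s
    have h2 : ∀ s : ℝ, HasDerivAt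
        (fun s => (∫ p, (a p + s * b p) ∂μ) - s * ∫ p, b p ∂μ) 0 s := by
      intro s
      have := (h1 s).sub (hasDerivAt_mul_const (∫ p, b p ∂μ))
      rwa [sub_self] at this
    have hconst := is_const_of_deriv_eq_zero (f := fun s =>
        (∫ p, (a p + s * b p) ∂μ) - s * ∫ p, b p ∂μ)
      (fun s => (h2 s).differentiableAt) (fun s => (h2 s).deriv) 1 0
    simp only [one_mul, zero_mul, add_zero, sub_zero] at hconst
    linarith
  set I : ℝ := ∫ p, V t p / H t p * osc t p * J t p ∂μ with hI
  -- derivative of A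
  have hAd : HasDerivAt A (A t) t := by
    have h := hLeibniz J J hJev t
    rw [← hA t] at h
    exact h.congr_of_eventuallyEq (Filter.Eventually.of_forall fun s => hA s)
  -- pointwise derivative of the B-integrand
  have hptB : ∀ t p, HasDerivAt (fun s => V s p * H s p * J s p)
      (((LapV t p / (H t p) ^ 2 + V t p * Ric t p / (H t p) ^ 2 + 2 * DV t p / H t p)
          * H t p
        + V t p * (-(LapInvH t p)
            - (osc t p + (H t p) ^ 2 / ((n : ℝ) - 1) + Ric t p) / H t p)) * J t p
        + V t p * H t p * J t p) t := by
    intro t p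
    exact ((hVev t p).mul (hHev t p)).mul (hJev t p)
  have hBint := hLeibniz _ _ hptB t
  -- rewrite the integrand as a sum of manageable pieces
  have hpt : ∀ p, (((LapV t p / (H t p) ^ 2 + V t p * Ric t p / (H t p) ^ 2
          + 2 * DV t p / H t p) * H t p
        + V t p * (-(LapInvH t p)
            - (osc t p + (H t p) ^ 2 / ((n : ℝ) - 1) + Ric t p) / H t p)) * J t p
        + V t p * H t p * J t p)
      = (H t p)⁻¹ * LapV t p * J t p + (-(V t p * LapInvH t p * J t p)
        + (2 * (DV t p * J t p) + (-(V t p / H t p * osc t p * J t p)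
          + (-(((n : ℝ) - 1)⁻¹) + 1) * (V t p * H t p * J t p)))) := by
    intro p
    have hH := (hHpos t p).ne'
    field_simp
    ring
  have hints : (∫ p, (((LapV t p / (H t p) ^ 2 + V t p * Ric t p / (H t p) ^ 2
          + 2 * DV t p / H t p) * H t p
        + V t p * (-(LapInvH t p)
            - (osc t p + (H t p) ^ 2 / ((n : ℝ) - 1) + Ric t p) / H t p)) * J t p
        + V t p * H t p * J t p) ∂μ)
      = 2 * (((n : ℝ) - 2) * ω * m) - I + (-(((n : ℝ) - 1)⁻¹) + 1) * B t := by
    simp only [hpt]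
    rw [hadd, hadd, hadd, hadd, integral_neg, integral_neg, integral_const_mul,
      integral_const_mul, hIBP t, hmass t, ← hB t, ← hI]
    ring
  rw [hints] at hBint
  have hBd : HasDerivAt B
      (2 * (((n : ℝ) - 2) * ω * m) - I + (-(((n : ℝ) - 1)⁻¹) + 1) * B t) t :=
    hBint.congr_of_eventuallyEq (Filter.Eventually.of_forall fun s => hB s)
  have hApow : HasDerivAt (fun s => A s ^ (-c)) (A t * (-c) * A t ^ (-c - 1)) t :=
    hAd.rpow_const (Or.inl (hApos t).ne')
  have hQd : HasDerivAt (fun s => A s ^ (-c) * (B s + 2 * ((n : ℝ) - 1) * ω * m))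
      (A t * (-c) * A t ^ (-c - 1) * (B t + 2 * ((n : ℝ) - 1) * ω * m)
        + A t ^ (-c) * (2 * (((n : ℝ) - 2) * ω * m) - I
          + (-(((n : ℝ) - 1)⁻¹) + 1) * B t)) t :=
    hApow.mul (hBd.add_const _)
  have h1 : A t * (-c) * A t ^ (-c - 1) = (-c) * A t ^ (-c) := by
    have h : A t ^ (-c) = A t ^ (-c - 1) * A t := by
      rw [← Real.rpow_add_one (hApos t).ne' (-c - 1)]
      congr 1
      ring
    rw [h]
    ring
  have hcK : c * (2 * ((n : ℝ) - 1) * ω * m) = 2 * (((n : ℝ) - 2) * ω * m) := by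
    simp only [hc]
    field_simp
  have hc1 : -(((n : ℝ) - 1)⁻¹) + 1 = c := by
    simp only [hc]
    field_simp
    ring
  have hder : A t * (-c) * A t ^ (-c - 1) * (B t + 2 * ((n : ℝ) - 1) * ω * m)
        + A t ^ (-c) * (2 * (((n : ℝ) - 2) * ω * m) - I
          + (-(((n : ℝ) - 1)⁻¹) + 1) * B t)
      = -(A t ^ (-c)) * I := by
    rw [h1, hc1]
    linear_combination (-(A t ^ (-c))) * hcK
  rw [hder] at hQd
  have hQder : HasDerivAt Q (-(A t ^ (-c)) * I) t :=
    hQd.congr_of_eventuallyEq (Filter.Eventually.of_forall fun s => hQ s)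
  refine ⟨hQder, ?_⟩
  have hI0 : 0 ≤ I := by
    rw [hI]
    refine integral_nonneg fun p => ?_
    have h1 := hHpos t p; have h2 := hVpos t p; have h3 := hJpos t p; have h4 := hosc t p
    positivity
  have hP : 0 < A t ^ (-c) := Real.rpow_pos_of_pos (hApos t) _
  nlinarith
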